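/- Let Θ ~ N(μ_Θ, Σ_Θ), Y|Θ ~ N(AΘ, S), and let the variational family be p_φ(θ|y) = N(θ; R_φ y + b_φ, Q_φ). The minimizer of the ELBO loss E_{Y}E^φ_{Θ|Y}[log(p_φ(θ|y)/p(θ))] + E_{Y}E^φ_{Θ|Y}[−log p(y|θ)] over (R_φ, b_φ, Q_φ) with Q_φ positive definite is given by Q_φ = (Aᵀ S⁻¹ A + Σ_Θ⁻¹)⁻¹, R_φ = Q_φ Aᵀ S⁻¹, b_φ = Q_φ Σ_Θ⁻¹ μ_Θ, i.e., the exact Bayes posterior. -/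

import Mathlib

open Matrix MeasureTheory Real

/-- Density of a multivariate Gaussian `N(μ, S)` on `ℝⁿ`. -/
noncomputable def gpdf {n : ℕ} (μ : Fin n → ℝ) (S : Matrix (Fin n) (Fin n) ℝ)
    (x : Fin n → ℝ) : ℝ :=
  (Real.sqrt ((2 * Real.pi) ^ n * S.det))⁻¹ *
    Real.exp (-(1 / 2 : ℝ) * ((x - μ) ⬝ᵥ (S⁻¹ *ᵥ (x - μ))))

section Aux
open Filter

noncomputable def g1 (t : ℝ) : ℝ := rexp (-(1/2 : ℝ) * t ^ 2)

lemma g1_fun_eq : g1 = fun t => rexp (-(1/2 : ℝ) * t ^ 2) := rfl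

lemma integrable_g1 : Integrable g1 := by
  rw [g1_fun_eq]; exact integrable_exp_neg_mul_sq (by norm_num : (0:ℝ) < 1/2)

lemma integral_g1 : ∫ t, g1 t = Real.sqrt (2 * π) := by
  rw [g1_fun_eq]
  rw [integral_gaussian, show π / (1/2:ℝ) = 2*π by ring]

lemma integrable_mul_g1 : Integrable (fun t => t * g1 t) := by
  rw [g1_fun_eq]; exact integrable_mul_exp_neg_mul_sq (by norm_num : (0:ℝ) < 1/2)

lemma integrable_sq_mul_g1 : Integrable (fun t => t ^ 2 * g1 t) := by
  have h := integrable_rpow_mul_exp_neg_mul_sq (by norm_num : (0:ℝ) < 1/2)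
    (by norm_num : (-1:ℝ) < 2)
  apply h.congr
  filter_upwards with x
  rw [g1_fun_eq, show ((2:ℝ)) = ((2:ℕ):ℝ) by norm_num, Real.rpow_natCast]

lemma hasDerivAt_g1 (t : ℝ) : HasDerivAt g1 (-t * g1 t) t := by
  have h : HasDerivAt (fun t : ℝ => -(1/2 : ℝ) * t ^ 2) (-t) t := by
    have := (hasDerivAt_pow 2 t).const_mul (-(1/2 : ℝ))
    exact this.congr_deriv (by norm_num; ring)
  have h2 := h.exp
  rw [g1_fun_eq]
  convert h2 using 1
  ring_nf

lemma tendsto_mul_g1 : Tendsto (fun R : ℝ => R * g1 R) atTop (nhds 0) := by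
  have h := rpow_mul_exp_neg_mul_sq_isLittleO_exp_neg (b := 1/2) (by norm_num) (s := 1)
  have h2 : Tendsto (fun x : ℝ => rexp (-(1/2) * x)) atTop (nhds 0) := by
    apply Real.tendsto_exp_atBot.comp
    exact (tendsto_id (α := ℝ)).const_mul_atTop_of_neg (by norm_num)
  have h3 := h.isBigO.trans_tendsto h2
  have heq : (fun R : ℝ => R * g1 R) =ᶠ[atTop] fun x : ℝ => x ^ (1:ℝ) * rexp (-(1/2) * x ^ 2) := by
    filter_upwards [eventually_ge_atTop (0:ℝ)] with x hx
    rw [Real.rpow_one]; rfl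
  exact Filter.Tendsto.congr' heq.symm h3

lemma integral_mul_g1 : ∫ t, t * g1 t = 0 := by
  have key : ∀ R : ℝ, ∫ t in (-R)..R, t * g1 t = -g1 R - -g1 (-R) := by
    intro R
    have hd : ∀ x ∈ Set.uIcc (-R) R, HasDerivAt (fun t => -g1 t) (x * g1 x) x := by
      intro x _
      have := (hasDerivAt_g1 x).neg
      simp only [neg_mul, neg_neg] at this
      exact this
    rw [intervalIntegral.integral_eq_sub_of_hasDerivAt hd integrable_mul_g1.intervalIntegrable]
  have lim := intervalIntegral_tendsto_integral integrable_mul_g1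
    (tendsto_neg_atBot_iff.mpr tendsto_id) tendsto_id
  have lim2 : Tendsto (fun R : ℝ => ∫ t in (-R)..R, t * g1 t) atTop (nhds 0) := by
    simp only [key]
    have : ∀ R : ℝ, -g1 R - -g1 (-R) = 0 := by
      intro R
      have : g1 (-R) = g1 R := by simp [g1]
      rw [this]; ring
    simp only [this]
    exact tendsto_const_nhds
  exact tendsto_nhds_unique lim lim2

lemma integral_sq_mul_g1 : ∫ t, t ^ 2 * g1 t = Real.sqrt (2 * π) := by
  have hint : Integrable (fun t : ℝ => t ^ 2 * g1 t - g1 t) :=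
    integrable_sq_mul_g1.sub integrable_g1
  have key : ∀ R : ℝ, ∫ t in (-R)..R, (t ^ 2 * g1 t - g1 t)
      = -(R * g1 R) - -((-R) * g1 (-R)) := by
    intro R
    have hd : ∀ x ∈ Set.uIcc (-R) R, HasDerivAt (fun t => -(t * g1 t)) (x ^ 2 * g1 x - g1 x) x := by
      intro x _
      have h1 : HasDerivAt (fun t : ℝ => t * g1 t) (1 * g1 x + x * (-x * g1 x)) x :=
        (hasDerivAt_id x).mul (hasDerivAt_g1 x)
      have h2 := h1.neg
      exact h2.congr_deriv (by ring)
    rw [intervalIntegral.integral_eq_sub_of_hasDerivAt hd hint.intervalIntegrable]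
  have lim := intervalIntegral_tendsto_integral hint
    (tendsto_neg_atBot_iff.mpr tendsto_id) tendsto_id
  have lim2 : Tendsto (fun R : ℝ => ∫ t in (-R)..R, (t ^ 2 * g1 t - g1 t)) atTop (nhds 0) := by
    simp only [key]
    have heq : ∀ R : ℝ, -(R * g1 R) - -((-R) * g1 (-R)) = -2 * (R * g1 R) := by
      intro R
      have : g1 (-R) = g1 R := by simp [g1]
      rw [this]; ring
    simp only [heq]
    have := tendsto_mul_g1.const_mul (-2 : ℝ)
    simpa using this
  have h0 : ∫ t, (t ^ 2 * g1 t - g1 t) = 0 := tendsto_nhds_unique lim lim2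
  have hsub := integral_sub integrable_sq_mul_g1 integrable_g1
  rw [h0, integral_g1] at hsub
  linarith

section Pi
open Finset
variable {k : ℕ}

noncomputable def Gk (u : Fin k → ℝ) : ℝ := ∏ i, g1 (u i)

lemma integrable_Gk : Integrable (Gk (k := k)) :=
  Integrable.fintype_prod (fun _ => integrable_g1)

lemma integral_Gk : ∫ u : Fin k → ℝ, Gk u = Real.sqrt (2 * π) ^ k := by
  rw [show (Gk (k := k)) = fun u => ∏ i, g1 (u i) from rfl,
    integral_fintype_prod_volume_eq_prod (f := fun (_ : Fin k) => g1)]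
  simp [integral_g1]

lemma integrable_Gk_lin (i : Fin k) : Integrable (fun u : Fin k → ℝ => Gk u * u i) := by
  have key : (fun u : Fin k → ℝ => Gk u * u i)
      = fun u => ∏ j', ((if j' = i then u j' else 1) * g1 (u j')) := by
    funext u
    rw [Finset.prod_mul_distrib, Finset.prod_ite_eq' Finset.univ i (fun j' => u j')]
    simp [Gk, mul_comm]
  rw [key]
  apply Integrable.fintype_prod (f := fun j' t => (if j' = i then t else 1) * g1 t)
  intro j'
  by_cases h : j' = i <;> simp [h]
  · exact integrable_mul_g1
  · exact integrable_g1

lemma integral_Gk_lin (i : Fin k) : ∫ u : Fin k → ℝ, Gk u * u i = 0 := by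
  have key : (fun u : Fin k → ℝ => Gk u * u i)
      = fun u => ∏ j', ((if j' = i then u j' else 1) * g1 (u j')) := by
    funext u
    rw [Finset.prod_mul_distrib, Finset.prod_ite_eq' Finset.univ i (fun j' => u j')]
    simp [Gk, mul_comm]
  rw [key, integral_fintype_prod_volume_eq_prod (f := fun j' t => (if j' = i then t else 1) * g1 t)]
  apply Finset.prod_eq_zero (Finset.mem_univ i)
  simp [integral_mul_g1]

lemma integrable_Gk_quad (i j : Fin k) :
    Integrable (fun u : Fin k → ℝ => Gk u * (u i * u j)) := by
  have key : (fun u : Fin k → ℝ => Gk u * (u i * u j))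
      = fun u => ∏ j', ((if j' = i then u j' else 1) * ((if j' = j then u j' else 1) * g1 (u j'))) := by
    funext u
    rw [Finset.prod_mul_distrib, Finset.prod_mul_distrib,
      Finset.prod_ite_eq' Finset.univ i (fun j' => u j'),
      Finset.prod_ite_eq' Finset.univ j (fun j' => u j')]
    simp [Gk]; ring
  rw [key]
  apply Integrable.fintype_prod
    (f := fun j' t => (if j' = i then t else 1) * ((if j' = j then t else 1) * g1 t))
  intro j'
  by_cases h1 : j' = i
  · by_cases h2 : j' = j
    · exact integrable_sq_mul_g1.congr
        (by filter_upwards with t; rw [if_pos h1, if_pos h2]; ring)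
    · exact integrable_mul_g1.congr
        (by filter_upwards with t; rw [if_pos h1, if_neg h2]; ring)
  · by_cases h2 : j' = j
    · exact integrable_mul_g1.congr
        (by filter_upwards with t; rw [if_neg h1, if_pos h2]; ring)
    · exact integrable_g1.congr
        (by filter_upwards with t; rw [if_neg h1, if_neg h2]; ring)

lemma integral_Gk_quad (i j : Fin k) :
    ∫ u : Fin k → ℝ, Gk u * (u i * u j)
      = if i = j then Real.sqrt (2 * π) ^ k else 0 := by
  have key : (fun u : Fin k → ℝ => Gk u * (u i * u j))
      = fun u => ∏ j', ((if j' = i then u j' else 1) * ((if j' = j then u j' else 1) * g1 (u j'))) := by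
    funext u
    rw [Finset.prod_mul_distrib, Finset.prod_mul_distrib,
      Finset.prod_ite_eq' Finset.univ i (fun j' => u j'),
      Finset.prod_ite_eq' Finset.univ j (fun j' => u j')]
    simp [Gk]; ring
  rw [key, integral_fintype_prod_volume_eq_prod
    (f := fun j' t => (if j' = i then t else 1) * ((if j' = j then t else 1) * g1 t))]
  by_cases hij : i = j
  · subst hij
    simp only [if_pos rfl]
    have : ∀ j' : Fin k, (∫ t : ℝ, (if j' = i then t else 1) * ((if j' = i then t else 1) * g1 t))
        = Real.sqrt (2 * π) := by
      intro j'
      by_cases h : j' = i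
      · simp only [if_pos h]
        rw [show (fun t : ℝ => t * (t * g1 t)) = fun t => t ^ 2 * g1 t
          from funext fun t => by ring]
        exact integral_sq_mul_g1
      · simp only [if_neg h, one_mul]
        exact integral_g1
    rw [Finset.prod_congr rfl (fun j' _ => this j')]
    rw [Finset.prod_const]
    simp
  · rw [if_neg hij]
    apply Finset.prod_eq_zero (Finset.mem_univ i)
    simp only [if_pos rfl, if_neg hij]
    simpa using integral_mul_g1

lemma Gk_expand (α : ℝ) (v : Fin k → ℝ) (N : Matrix (Fin k) (Fin k) ℝ) (u : Fin k → ℝ) :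
    Gk u * (α + v ⬝ᵥ u + u ⬝ᵥ N *ᵥ u)
      = Gk u * α + (∑ i, v i * (Gk u * u i))
        + ∑ i, ∑ j, N i j * (Gk u * (u i * u j)) := by
  simp only [dotProduct, Matrix.mulVec, mul_add, Finset.mul_sum]
  congr 1
  · congr 1
    exact Finset.sum_congr rfl fun i _ => by ring
  · refine Finset.sum_congr rfl fun i _ => ?_
    exact Finset.sum_congr rfl fun j _ => by ring

lemma integrable_Gk_poly (α : ℝ) (v : Fin k → ℝ) (N : Matrix (Fin k) (Fin k) ℝ) :
    Integrable (fun u : Fin k → ℝ => Gk u * (α + v ⬝ᵥ u + u ⬝ᵥ N *ᵥ u)) := by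
  simp only [Gk_expand]
  refine Integrable.add (Integrable.add ?_ ?_) ?_
  · exact integrable_Gk.mul_const α
  · exact integrable_finset_sum _ fun i _ => (integrable_Gk_lin i).const_mul (v i)
  · exact integrable_finset_sum _ fun i _ =>
      integrable_finset_sum _ fun j _ => (integrable_Gk_quad i j).const_mul (N i j)

lemma integral_Gk_poly (α : ℝ) (v : Fin k → ℝ) (N : Matrix (Fin k) (Fin k) ℝ) :
    ∫ u : Fin k → ℝ, Gk u * (α + v ⬝ᵥ u + u ⬝ᵥ N *ᵥ u)
      = (α + N.trace) * Real.sqrt (2 * π) ^ k := by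
  simp only [Gk_expand]
  have h1 : Integrable (fun u : Fin k → ℝ => Gk u * α) := integrable_Gk.mul_const α
  have h2 : Integrable (fun u : Fin k → ℝ => ∑ i, v i * (Gk u * u i)) :=
    integrable_finset_sum _ fun i _ => (integrable_Gk_lin i).const_mul (v i)
  have h3 : Integrable (fun u : Fin k → ℝ => ∑ i, ∑ j, N i j * (Gk u * (u i * u j))) :=
    integrable_finset_sum _ fun i _ =>
      integrable_finset_sum _ fun j _ => (integrable_Gk_quad i j).const_mul (N i j)
  have h12 : Integrable (fun u : Fin k → ℝ => Gk u * α + ∑ i, v i * (Gk u * u i)) := h1.add h2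
  rw [integral_add h12 h3, integral_add h1 h2,
    integral_mul_const, integral_Gk,
    integral_finset_sum _ (fun i _ => (integrable_Gk_lin i).const_mul (v i)),
    integral_finset_sum _ (fun i _ =>
      integrable_finset_sum _ fun j _ => (integrable_Gk_quad i j).const_mul (N i j))]
  rw [Finset.sum_congr rfl (fun i _ => integral_finset_sum _
    (fun j _ => (integrable_Gk_quad i j).const_mul (N i j)))]
  simp only [integral_const_mul, integral_Gk_lin, integral_Gk_quad, mul_zero,
    Finset.sum_const_zero]
  have hsum : ∀ i : Fin k, (∑ j, N i j * (if i = j then Real.sqrt (2*π) ^ k else 0))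
      = N i i * Real.sqrt (2*π) ^ k := by
    intro i
    simp [mul_ite, mul_zero, Finset.sum_ite_eq]
  rw [Finset.sum_congr rfl (fun i _ => hsum i)]
  rw [← Finset.sum_mul]
  simp only [Matrix.trace, Matrix.diag]
  ring

end Pi

section CoV
variable {k : ℕ}

lemma sqrt_pow_nat {x : ℝ} (hx : 0 ≤ x) (k : ℕ) : Real.sqrt (x ^ k) = Real.sqrt x ^ k := by
  induction k with
  | zero => simp
  | succ k ih => rw [pow_succ, pow_succ, Real.sqrt_mul (pow_nonneg hx k), ih]

lemma integral_comp_affine (M : Matrix (Fin k) (Fin k) ℝ) (hM : M.det ≠ 0) (c : Fin k → ℝ)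
    (f : (Fin k → ℝ) → ℝ) (hf : AEStronglyMeasurable f (volume : Measure (Fin k → ℝ))) :
    ∫ x, f x = |M.det| * ∫ u, f (M *ᵥ u + c) := by
  have hmap := Real.map_matrix_volume_pi_eq_smul_volume_pi hM
  have hAEm : AEMeasurable (⇑(Matrix.toLin' M)) (volume : Measure (Fin k → ℝ)) :=
    (Matrix.toLin' M).continuous_of_finiteDimensional.measurable.aemeasurable
  have hmp : MeasurePreserving (fun x : Fin k → ℝ => x + c) volume volume :=
    measurePreserving_add_right volume c
  have hfc : AEStronglyMeasurable (fun x : Fin k → ℝ => f (x + c)) volume :=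
    hf.comp_quasiMeasurePreserving hmp.quasiMeasurePreserving
  have hν : AEStronglyMeasurable (fun x : Fin k → ℝ => f (x + c))
      (Measure.map (⇑(Matrix.toLin' M)) volume) := by
    rw [hmap]
    exact hfc.mono_ac Measure.smul_absolutelyContinuous
  have key : ∫ u, f (M *ᵥ u + c) = |M.det|⁻¹ * ∫ x, f x := by
    calc ∫ u, f (M *ᵥ u + c) = ∫ u, (fun x => f (x + c)) (Matrix.toLin' M u) := by
          simp only [Matrix.toLin'_apply]
      _ = ∫ x, f (x + c) ∂(Measure.map (⇑(Matrix.toLin' M)) volume) :=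
          (integral_map hAEm hν).symm
      _ = (ENNReal.ofReal |M.det⁻¹|).toReal • ∫ x, f (x + c) := by
          rw [hmap, integral_smul_measure]
      _ = |M.det|⁻¹ * ∫ x, f x := by
          rw [ENNReal.toReal_ofReal (abs_nonneg _), integral_add_right_eq_self, abs_inv]
          rfl
  rw [key]
  field_simp

lemma integrable_comp_affine (M : Matrix (Fin k) (Fin k) ℝ) (hM : M.det ≠ 0) (c : Fin k → ℝ)
    (f : (Fin k → ℝ) → ℝ) (hf : AEStronglyMeasurable f (volume : Measure (Fin k → ℝ))) :
    Integrable (fun u => f (M *ᵥ u + c)) ↔ Integrable f := by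
  have hmap := Real.map_matrix_volume_pi_eq_smul_volume_pi hM
  have hAEm : AEMeasurable (⇑(Matrix.toLin' M)) (volume : Measure (Fin k → ℝ)) :=
    (Matrix.toLin' M).continuous_of_finiteDimensional.measurable.aemeasurable
  have hmp : MeasurePreserving (fun x : Fin k → ℝ => x + c) volume volume :=
    measurePreserving_add_right volume c
  have hfc : AEStronglyMeasurable (fun x : Fin k → ℝ => f (x + c)) volume :=
    hf.comp_quasiMeasurePreserving hmp.quasiMeasurePreserving
  have hν : AEStronglyMeasurable (fun x : Fin k → ℝ => f (x + c))
      (Measure.map (⇑(Matrix.toLin' M)) volume) := by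
    rw [hmap]
    exact hfc.mono_ac Measure.smul_absolutelyContinuous
  have he : (fun u : Fin k → ℝ => f (M *ᵥ u + c))
      = (fun x : Fin k → ℝ => f (x + c)) ∘ (⇑(Matrix.toLin' M)) := by
    funext u
    simp [Function.comp, Matrix.toLin'_apply]
  rw [he, ← integrable_map_measure hν hAEm, hmap,
    integrable_smul_measure (by simp [ENNReal.ofReal_eq_zero, abs_pos]; exact hM)
      ENNReal.ofReal_ne_top]
  exact hmp.integrable_comp hf

end CoV

section Gpdf
open scoped MatrixOrder
variable {k : ℕ}

lemma normconst_pos {Q : Matrix (Fin k) (Fin k) ℝ} (hQ : Q.PosDef) :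
    0 < Real.sqrt ((2 * π) ^ k * Q.det) := by
  apply Real.sqrt_pos.mpr
  exact mul_pos (pow_pos (by positivity) k) hQ.det_pos

lemma gpdf_pos {Q : Matrix (Fin k) (Fin k) ℝ} (hQ : Q.PosDef) (μ x : Fin k → ℝ) :
    0 < gpdf μ Q x :=
  mul_pos (inv_pos.mpr (normconst_pos hQ)) (Real.exp_pos _)

lemma continuous_quadform (N : Matrix (Fin k) (Fin k) ℝ) (μ : Fin k → ℝ) :
    Continuous fun x : Fin k → ℝ => (x - μ) ⬝ᵥ N *ᵥ (x - μ) := by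
  simp only [dotProduct, Matrix.mulVec]
  apply continuous_finset_sum
  intro i _
  apply Continuous.mul
  · exact (continuous_apply i).sub continuous_const
  · apply continuous_finset_sum
    intro j _
    exact continuous_const.mul ((continuous_apply j).sub continuous_const)

lemma continuous_linform (v : Fin k → ℝ) (μ : Fin k → ℝ) :
    Continuous fun x : Fin k → ℝ => v ⬝ᵥ (x - μ) := by
  simp only [dotProduct]
  apply continuous_finset_sum
  intro i _
  exact continuous_const.mul ((continuous_apply i).sub continuous_const)

lemma continuous_gpdf (μ : Fin k → ℝ) (Q : Matrix (Fin k) (Fin k) ℝ) :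
    Continuous (gpdf μ Q) := by
  unfold gpdf
  exact continuous_const.mul
    (Real.continuous_exp.comp (continuous_const.mul (continuous_quadform Q⁻¹ μ)))

variable {Q L : Matrix (Fin k) (Fin k) ℝ}

lemma sqrt_abs_det (hQ : Q.PosDef) (hLL : L * L = Q) : |L.det| = Real.sqrt Q.det := by
  rw [← Real.sqrt_sq_eq_abs]
  congr 1
  rw [pow_two, ← Matrix.det_mul, hLL]

lemma sqrt_det_ne (hQ : Q.PosDef) (hLL : L * L = Q) : L.det ≠ 0 := by
  intro h
  have h2 : Q.det = 0 := by rw [← hLL, Matrix.det_mul, h, mul_zero]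
  exact (ne_of_gt hQ.det_pos) h2

lemma quad_inv_rel (hLL : L * L = Q) (hLT : Lᵀ = L) (hLdet : L.det ≠ 0) :
    Lᵀ * (Q⁻¹ * L) = 1 := by
  have hU : IsUnit L.det := isUnit_iff_ne_zero.mpr hLdet
  have h1 : Q⁻¹ = L⁻¹ * L⁻¹ := by rw [← hLL, Matrix.mul_inv_rev]
  rw [hLT, h1]
  simp only [← Matrix.mul_assoc]
  rw [Matrix.mul_nonsing_inv _ hU, Matrix.one_mul, Matrix.nonsing_inv_mul _ hU]

lemma gpdf_comp' (μ : Fin k → ℝ) (hLL : L * L = Q) (hLT : Lᵀ = L) (hLdet : L.det ≠ 0)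
    (u : Fin k → ℝ) :
    gpdf μ Q (L *ᵥ u + μ) = (Real.sqrt ((2 * π) ^ k * Q.det))⁻¹ * Gk u := by
  unfold gpdf
  congr 1
  have hsub : L *ᵥ u + μ - μ = L *ᵥ u := add_sub_cancel_right _ _
  rw [hsub]
  have hquad : (L *ᵥ u) ⬝ᵥ Q⁻¹ *ᵥ (L *ᵥ u) = u ⬝ᵥ u := by
    rw [Matrix.mulVec_mulVec, Matrix.dotProduct_mulVec, Matrix.vecMul_mulVec,
      quad_inv_rel hLL hLT hLdet, Matrix.vecMul_one]
  rw [hquad]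
  have h2 : -(1/2 : ℝ) * (u ⬝ᵥ u) = ∑ i, -(1/2 : ℝ) * (u i) ^ 2 := by
    simp only [dotProduct, Finset.mul_sum]
    exact Finset.sum_congr rfl fun i _ => by ring
  rw [h2, Real.exp_sum]
  rfl

lemma gauss_comp_poly' (μ : Fin k → ℝ) (hLL : L * L = Q) (hLT : Lᵀ = L) (hLdet : L.det ≠ 0)
    (α : ℝ) (v : Fin k → ℝ) (N : Matrix (Fin k) (Fin k) ℝ) (u : Fin k → ℝ) :
    gpdf μ Q (L *ᵥ u + μ) *
        (α + v ⬝ᵥ (L *ᵥ u + μ - μ) + (L *ᵥ u + μ - μ) ⬝ᵥ N *ᵥ (L *ᵥ u + μ - μ))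
      = (Real.sqrt ((2 * π) ^ k * Q.det))⁻¹
          * (Gk u * (α + (v ᵥ* L) ⬝ᵥ u + u ⬝ᵥ (Lᵀ * (N * L)) *ᵥ u)) := by
  have hsub : L *ᵥ u + μ - μ = L *ᵥ u := add_sub_cancel_right _ _
  rw [hsub, gpdf_comp' μ hLL hLT hLdet u, mul_assoc]
  congr 2
  congr 1
  · congr 1
    exact Matrix.dotProduct_mulVec v L u
  · rw [Matrix.mulVec_mulVec, Matrix.dotProduct_mulVec, Matrix.vecMul_mulVec,
      Matrix.dotProduct_mulVec]

lemma gauss_integrable_poly (hQ : Q.PosDef) (μ : Fin k → ℝ) (α : ℝ) (v : Fin k → ℝ)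
    (N : Matrix (Fin k) (Fin k) ℝ) :
    Integrable (fun x : Fin k → ℝ =>
      gpdf μ Q x * (α + v ⬝ᵥ (x - μ) + (x - μ) ⬝ᵥ N *ᵥ (x - μ))) := by
  have hLL : CFC.sqrt Q * CFC.sqrt Q = Q := CFC.sqrt_mul_sqrt_self Q hQ.posSemidef.nonneg
  have hLT : (CFC.sqrt Q)ᵀ = CFC.sqrt Q := by
    simpa using (CFC.sqrt_nonneg Q).posSemidef.1.eq
  have hLdet := sqrt_det_ne hQ hLL
  have hcont : Continuous (fun x : Fin k → ℝ =>
      gpdf μ Q x * (α + v ⬝ᵥ (x - μ) + (x - μ) ⬝ᵥ N *ᵥ (x - μ))) :=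
    (continuous_gpdf μ Q).mul
      ((continuous_const.add (continuous_linform v μ)).add (continuous_quadform N μ))
  rw [← integrable_comp_affine (CFC.sqrt Q) hLdet μ _ hcont.aestronglyMeasurable]
  have heq : (fun u : Fin k → ℝ => gpdf μ Q (CFC.sqrt Q *ᵥ u + μ) *
      (α + v ⬝ᵥ (CFC.sqrt Q *ᵥ u + μ - μ)
        + (CFC.sqrt Q *ᵥ u + μ - μ) ⬝ᵥ N *ᵥ (CFC.sqrt Q *ᵥ u + μ - μ)))
      = fun u => (Real.sqrt ((2 * π) ^ k * Q.det))⁻¹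
          * (Gk u * (α + (v ᵥ* CFC.sqrt Q) ⬝ᵥ u
              + u ⬝ᵥ ((CFC.sqrt Q)ᵀ * (N * CFC.sqrt Q)) *ᵥ u)) := by
    funext u
    exact gauss_comp_poly' μ hLL hLT hLdet α v N u
  rw [heq]
  exact (integrable_Gk_poly α _ _).const_mul _

lemma gauss_integral_poly (hQ : Q.PosDef) (μ : Fin k → ℝ) (α : ℝ) (v : Fin k → ℝ)
    (N : Matrix (Fin k) (Fin k) ℝ) :
    ∫ x : Fin k → ℝ, gpdf μ Q x * (α + v ⬝ᵥ (x - μ) + (x - μ) ⬝ᵥ N *ᵥ (x - μ))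
      = α + (N * Q).trace := by
  have hLL : CFC.sqrt Q * CFC.sqrt Q = Q := CFC.sqrt_mul_sqrt_self Q hQ.posSemidef.nonneg
  have hLT : (CFC.sqrt Q)ᵀ = CFC.sqrt Q := by
    simpa using (CFC.sqrt_nonneg Q).posSemidef.1.eq
  have hLdet := sqrt_det_ne hQ hLL
  have hcont : Continuous (fun x : Fin k → ℝ =>
      gpdf μ Q x * (α + v ⬝ᵥ (x - μ) + (x - μ) ⬝ᵥ N *ᵥ (x - μ))) :=
    (continuous_gpdf μ Q).mul
      ((continuous_const.add (continuous_linform v μ)).add (continuous_quadform N μ))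
  rw [integral_comp_affine (CFC.sqrt Q) hLdet μ _ hcont.aestronglyMeasurable]
  have heq : (fun u : Fin k → ℝ => gpdf μ Q (CFC.sqrt Q *ᵥ u + μ) *
      (α + v ⬝ᵥ (CFC.sqrt Q *ᵥ u + μ - μ)
        + (CFC.sqrt Q *ᵥ u + μ - μ) ⬝ᵥ N *ᵥ (CFC.sqrt Q *ᵥ u + μ - μ)))
      = fun u => (Real.sqrt ((2 * π) ^ k * Q.det))⁻¹
          * (Gk u * (α + (v ᵥ* CFC.sqrt Q) ⬝ᵥ u
              + u ⬝ᵥ ((CFC.sqrt Q)ᵀ * (N * CFC.sqrt Q)) *ᵥ u)) := by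
    funext u
    exact gauss_comp_poly' μ hLL hLT hLdet α v N u
  rw [heq, integral_const_mul, integral_Gk_poly, sqrt_abs_det hQ hLL]
  have htr : ((CFC.sqrt Q)ᵀ * (N * CFC.sqrt Q)).trace = (N * Q).trace := by
    rw [hLT, ← Matrix.mul_assoc, Matrix.trace_mul_cycle, hLL, Matrix.trace_mul_comm]
  rw [htr]
  have hc : Real.sqrt ((2 * π) ^ k * Q.det) = Real.sqrt (2 * π) ^ k * Real.sqrt Q.det := by
    rw [Real.sqrt_mul (by positivity), sqrt_pow_nat (by positivity)]
  rw [hc]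
  have h1 : (0:ℝ) < Real.sqrt (2 * π) ^ k := pow_pos (Real.sqrt_pos.mpr (by positivity)) k
  have h2 : (0:ℝ) < Real.sqrt Q.det := Real.sqrt_pos.mpr hQ.det_pos
  field_simp

lemma gauss_integrable {Q : Matrix (Fin k) (Fin k) ℝ} (hQ : Q.PosDef) (μ : Fin k → ℝ) :
    Integrable (gpdf μ Q) := by
  have h := gauss_integrable_poly hQ μ 1 0 0
  apply h.congr
  filter_upwards with x
  simp [Matrix.zero_mulVec]

lemma gauss_integral_one {Q : Matrix (Fin k) (Fin k) ℝ} (hQ : Q.PosDef) (μ : Fin k → ℝ) :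
    ∫ x : Fin k → ℝ, gpdf μ Q x = 1 := by
  have h := gauss_integral_poly hQ μ 1 0 0
  simp only [Matrix.zero_mulVec, dotProduct_zero, zero_dotProduct, add_zero,
    Matrix.zero_mul, Matrix.trace_zero, mul_one] at h
  exact h

end Gpdf

section MatrixHelpers

lemma real_conjT {a b : ℕ} (B : Matrix (Fin a) (Fin b) ℝ) : Bᴴ = Bᵀ := by
  ext i j
  simp [Matrix.conjTranspose_apply]

lemma posDef_add_posSemidef {k : ℕ} {X Y : Matrix (Fin k) (Fin k) ℝ}
    (hX : X.PosSemidef) (hY : Y.PosDef) : (X + Y).PosDef := by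
  exact Matrix.PosDef.posSemidef_add hX hY

lemma posSemidef_conj {m n : ℕ} {S : Matrix (Fin n) (Fin n) ℝ} (hS : S.PosSemidef)
    (A : Matrix (Fin n) (Fin m) ℝ) : (Aᵀ * S * A).PosSemidef := by
  have := hS.conjTranspose_mul_mul_same A
  rwa [real_conjT] at this

lemma posSemidef_conj' {m n : ℕ} {S : Matrix (Fin m) (Fin m) ℝ} (hS : S.PosSemidef)
    (A : Matrix (Fin n) (Fin m) ℝ) : (A * S * Aᵀ).PosSemidef := by
  have := hS.conjTranspose_mul_mul_same Aᵀ
  rwa [real_conjT, Matrix.transpose_transpose] at this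

lemma dot_shift {a b : ℕ} (M : Matrix (Fin a) (Fin b) ℝ) (z : Fin b → ℝ) (w : Fin a → ℝ) :
    (M *ᵥ z) ⬝ᵥ w = z ⬝ᵥ (Mᵀ *ᵥ w) := by
  rw [dotProduct_comm, Matrix.dotProduct_mulVec, ← Matrix.mulVec_transpose, dotProduct_comm]

lemma quad_expand {a : ℕ} {N : Matrix (Fin a) (Fin a) ℝ} (hN : Nᵀ = N) (z d : Fin a → ℝ) :
    (z + d) ⬝ᵥ N *ᵥ (z + d)
      = (d ⬝ᵥ N *ᵥ d) + ((2:ℝ) • (N *ᵥ d)) ⬝ᵥ z + z ⬝ᵥ N *ᵥ z := by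
  rw [Matrix.mulVec_add, dotProduct_add, add_dotProduct, add_dotProduct]
  have h1 : d ⬝ᵥ N *ᵥ z = (N *ᵥ d) ⬝ᵥ z := by
    rw [dot_shift, hN]
  have h2 : z ⬝ᵥ N *ᵥ d = (N *ᵥ d) ⬝ᵥ z := dotProduct_comm _ _
  rw [h1, h2, smul_dotProduct, smul_eq_mul]
  ring

lemma woodbury {m n : ℕ} (A : Matrix (Fin n) (Fin m) ℝ)
    (S Si : Matrix (Fin n) (Fin n) ℝ) (Sg Ti Qp : Matrix (Fin m) (Fin m) ℝ)
    (hS1 : Si * S = 1) (hT1 : Ti * Sg = 1)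
    (hQP : Qp * (Aᵀ * Si * A + Ti) = 1) :
    (Si - Si * A * Qp * Aᵀ * Si) * (A * Sg * Aᵀ + S) = 1 := by
  have e : Aᵀ * (Si * (A * (Sg * Aᵀ) + S)) = (Aᵀ * Si * A + Ti) * (Sg * Aᵀ) := by
    rw [Matrix.mul_add, Matrix.mul_add, hS1, Matrix.mul_one, Matrix.add_mul]
    congr 1
    · simp only [Matrix.mul_assoc]
    · rw [← Matrix.mul_assoc, hT1, Matrix.one_mul]
  have h2 : Qp * (Aᵀ * (Si * (A * (Sg * Aᵀ) + S))) = Sg * Aᵀ := by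
    rw [e, ← Matrix.mul_assoc, hQP, Matrix.one_mul]
  have h3 : (Si - Si * A * Qp * Aᵀ * Si) * (A * (Sg * Aᵀ) + S) = 1 := by
    rw [Matrix.sub_mul]
    have h4 : Si * A * Qp * Aᵀ * Si * (A * (Sg * Aᵀ) + S) = Si * (A * (Sg * Aᵀ)) := by
      calc Si * A * Qp * Aᵀ * Si * (A * (Sg * Aᵀ) + S)
          = Si * (A * (Qp * (Aᵀ * (Si * (A * (Sg * Aᵀ) + S))))) := by
            simp only [Matrix.mul_assoc]
        _ = Si * (A * (Sg * Aᵀ)) := by rw [h2]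
    rw [h4, Matrix.mul_add, hS1, add_sub_cancel_left]
  calc (Si - Si * A * Qp * Aᵀ * Si) * (A * Sg * Aᵀ + S)
      = (Si - Si * A * Qp * Aᵀ * Si) * (A * (Sg * Aᵀ) + S) := by
        rw [Matrix.mul_assoc A Sg Aᵀ]
    _ = 1 := h3

lemma det_split {m n : ℕ} (A : Matrix (Fin n) (Fin m) ℝ)
    (S Si : Matrix (Fin n) (Fin n) ℝ) (Sg Ti : Matrix (Fin m) (Fin m) ℝ)
    (hS2 : S * Si = 1) (hT1 : Ti * Sg = 1) :
    (A * Sg * Aᵀ + S).det = (Aᵀ * Si * A + Ti).det * Sg.det * S.det := by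
  have e1 : A * Sg * Aᵀ + S = S * (Si * (A * Sg * Aᵀ) + 1) := by
    rw [Matrix.mul_add, Matrix.mul_one, ← Matrix.mul_assoc, hS2, Matrix.one_mul, add_comm]
  have e2 : Si * (A * Sg * Aᵀ) + 1 = 1 + (Si * A * Sg) * Aᵀ := by
    rw [add_comm]
    congr 1
    simp only [Matrix.mul_assoc]
  have e3 : 1 + Aᵀ * (Si * A * Sg) = (Aᵀ * Si * A + Ti) * Sg := by
    rw [Matrix.add_mul, hT1, add_comm]
    congr 1
    simp only [Matrix.mul_assoc]
  rw [e1, Matrix.det_mul, e2, Matrix.det_one_add_mul_comm, e3, Matrix.det_mul]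
  ring

end MatrixHelpers

section KL
variable {k : ℕ} {Q1 Q2 : Matrix (Fin k) (Fin k) ℝ}

lemma log_gpdf (hQ : Q1.PosDef) (μ x : Fin k → ℝ) :
    Real.log (gpdf μ Q1 x)
      = -Real.log (Real.sqrt ((2 * π) ^ k * Q1.det))
        - (1/2 : ℝ) * ((x - μ) ⬝ᵥ Q1⁻¹ *ᵥ (x - μ)) := by
  unfold gpdf
  rw [Real.log_mul (ne_of_gt (inv_pos.mpr (normconst_pos hQ))) (Real.exp_ne_zero _),
    Real.log_inv, Real.log_exp]
  ring

lemma log_gpdf_ratio (h1 : Q1.PosDef) (h2 : Q2.PosDef) (hQ2T : (Q2⁻¹)ᵀ = Q2⁻¹)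
    (μ1 μ2 x : Fin k → ℝ) :
    Real.log (gpdf μ1 Q1 x / gpdf μ2 Q2 x)
      = (Real.log (Real.sqrt ((2*π)^k * Q2.det)) - Real.log (Real.sqrt ((2*π)^k * Q1.det))
          + (1/2 : ℝ) * ((μ1 - μ2) ⬝ᵥ Q2⁻¹ *ᵥ (μ1 - μ2)))
        + (Q2⁻¹ *ᵥ (μ1 - μ2)) ⬝ᵥ (x - μ1)
        + (x - μ1) ⬝ᵥ ((1/2 : ℝ) • Q2⁻¹ - (1/2 : ℝ) • Q1⁻¹) *ᵥ (x - μ1) := by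
  rw [Real.log_div (ne_of_gt (gpdf_pos h1 μ1 x)) (ne_of_gt (gpdf_pos h2 μ2 x)),
    log_gpdf h1, log_gpdf h2]
  have hsplit : x - μ2 = (x - μ1) + (μ1 - μ2) := by abel
  rw [hsplit, quad_expand hQ2T]
  have e1 : (x - μ1) ⬝ᵥ ((1/2 : ℝ) • Q2⁻¹ - (1/2 : ℝ) • Q1⁻¹) *ᵥ (x - μ1)
      = (1/2 : ℝ) * ((x - μ1) ⬝ᵥ Q2⁻¹ *ᵥ (x - μ1))
        - (1/2 : ℝ) * ((x - μ1) ⬝ᵥ Q1⁻¹ *ᵥ (x - μ1)) := by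
    rw [Matrix.sub_mulVec, dotProduct_sub, Matrix.smul_mulVec, Matrix.smul_mulVec,
      dotProduct_smul, dotProduct_smul, smul_eq_mul, smul_eq_mul]
  rw [e1, smul_dotProduct, smul_eq_mul]
  have e2 : (Q2⁻¹ *ᵥ (μ1 - μ2)) ⬝ᵥ (x - μ1) = (Q2⁻¹ *ᵥ (μ1 - μ2)) ⬝ᵥ (x - μ1) := rfl
  ring

lemma KL_integrable (h1 : Q1.PosDef) (h2 : Q2.PosDef) (hQ2T : (Q2⁻¹)ᵀ = Q2⁻¹)
    (μ1 μ2 : Fin k → ℝ) :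
    Integrable (fun x : Fin k → ℝ =>
      gpdf μ1 Q1 x * Real.log (gpdf μ1 Q1 x / gpdf μ2 Q2 x)) := by
  apply (gauss_integrable_poly h1 μ1
    (Real.log (Real.sqrt ((2*π)^k * Q2.det)) - Real.log (Real.sqrt ((2*π)^k * Q1.det))
      + (1/2 : ℝ) * ((μ1 - μ2) ⬝ᵥ Q2⁻¹ *ᵥ (μ1 - μ2)))
    (Q2⁻¹ *ᵥ (μ1 - μ2))
    ((1/2 : ℝ) • Q2⁻¹ - (1/2 : ℝ) • Q1⁻¹)).congr
  filter_upwards with x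
  rw [log_gpdf_ratio h1 h2 hQ2T]

lemma KL_value (h1 : Q1.PosDef) (h2 : Q2.PosDef) (hQ2T : (Q2⁻¹)ᵀ = Q2⁻¹)
    (μ1 μ2 : Fin k → ℝ) :
    ∫ x : Fin k → ℝ, gpdf μ1 Q1 x * Real.log (gpdf μ1 Q1 x / gpdf μ2 Q2 x)
      = (Real.log (Real.sqrt ((2*π)^k * Q2.det)) - Real.log (Real.sqrt ((2*π)^k * Q1.det))
          + (1/2 : ℝ) * ((μ1 - μ2) ⬝ᵥ Q2⁻¹ *ᵥ (μ1 - μ2)))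
        + (((1/2 : ℝ) • Q2⁻¹ - (1/2 : ℝ) • Q1⁻¹) * Q1).trace := by
  rw [show (fun x : Fin k → ℝ => gpdf μ1 Q1 x * Real.log (gpdf μ1 Q1 x / gpdf μ2 Q2 x))
      = fun x => gpdf μ1 Q1 x *
        ((Real.log (Real.sqrt ((2*π)^k * Q2.det)) - Real.log (Real.sqrt ((2*π)^k * Q1.det))
          + (1/2 : ℝ) * ((μ1 - μ2) ⬝ᵥ Q2⁻¹ *ᵥ (μ1 - μ2)))
        + (Q2⁻¹ *ᵥ (μ1 - μ2)) ⬝ᵥ (x - μ1)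
        + (x - μ1) ⬝ᵥ ((1/2 : ℝ) • Q2⁻¹ - (1/2 : ℝ) • Q1⁻¹) *ᵥ (x - μ1))
    from funext fun x => by rw [log_gpdf_ratio h1 h2 hQ2T]]
  exact gauss_integral_poly h1 μ1 _ _ _

lemma KL_nonneg (h1 : Q1.PosDef) (h2 : Q2.PosDef) (hQ2T : (Q2⁻¹)ᵀ = Q2⁻¹)
    (μ1 μ2 : Fin k → ℝ) :
    0 ≤ ∫ x : Fin k → ℝ, gpdf μ1 Q1 x * Real.log (gpdf μ1 Q1 x / gpdf μ2 Q2 x) := by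
  have hle : ∀ x, gpdf μ1 Q1 x - gpdf μ2 Q2 x
      ≤ gpdf μ1 Q1 x * Real.log (gpdf μ1 Q1 x / gpdf μ2 Q2 x) := by
    intro x
    have ha : 0 < gpdf μ1 Q1 x := gpdf_pos h1 μ1 x
    have hc : 0 < gpdf μ2 Q2 x := gpdf_pos h2 μ2 x
    set a := gpdf μ1 Q1 x
    set c := gpdf μ2 Q2 x
    have h := Real.log_le_sub_one_of_pos (div_pos hc ha)
    have hflip : Real.log (a / c) = - Real.log (c / a) := by
      rw [← Real.log_inv, inv_div]
    rw [hflip]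
    have h2' : a * Real.log (c/a) ≤ a * (c/a - 1) := mul_le_mul_of_nonneg_left h ha.le
    have h3 : a * (c/a - 1) = c - a := by
      field_simp
    nlinarith [h2', h3]
  have h0 : ∫ x : Fin k → ℝ, (gpdf μ1 Q1 x - gpdf μ2 Q2 x) = 0 := by
    rw [integral_sub (gauss_integrable h1 μ1) (gauss_integrable h2 μ2),
      gauss_integral_one h1, gauss_integral_one h2, sub_self]
  have hm := integral_mono ((gauss_integrable h1 μ1).sub (gauss_integrable h2 μ2))
    (KL_integrable h1 h2 hQ2T μ1 μ2) hle
  simp only [Pi.sub_apply] at hm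
  rw [h0] at hm
  exact hm

lemma neglog_integrable {Q : Matrix (Fin k) (Fin k) ℝ} (hQ : Q.PosDef) (μ : Fin k → ℝ) :
    Integrable (fun x : Fin k → ℝ => gpdf μ Q x * (- Real.log (gpdf μ Q x))) := by
  apply (gauss_integrable_poly hQ μ (Real.log (Real.sqrt ((2*π)^k * Q.det)))
    0 ((1/2 : ℝ) • Q⁻¹)).congr
  filter_upwards with x
  rw [log_gpdf hQ]
  rw [zero_dotProduct, add_zero]
  congr 1
  rw [Matrix.smul_mulVec, dotProduct_smul, smul_eq_mul]
  ring

end KL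

section Conj
variable {m n : ℕ}

lemma conj_density (μΘ : Fin m → ℝ) (SigΘ : Matrix (Fin m) (Fin m) ℝ)
    (A : Matrix (Fin n) (Fin m) ℝ) (S : Matrix (Fin n) (Fin n) ℝ)
    (hSigΘ : SigΘ.PosDef) (hS : S.PosDef) (θ : Fin m → ℝ) (y : Fin n → ℝ) :
    gpdf μΘ SigΘ θ * gpdf (A *ᵥ θ) S y
      = gpdf (((Aᵀ * S⁻¹ * A + SigΘ⁻¹)⁻¹ * Aᵀ * S⁻¹) *ᵥ y
            + (Aᵀ * S⁻¹ * A + SigΘ⁻¹)⁻¹ *ᵥ (SigΘ⁻¹ *ᵥ μΘ)) (Aᵀ * S⁻¹ * A + SigΘ⁻¹)⁻¹ θ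
        * gpdf (A *ᵥ μΘ) (A * SigΘ * Aᵀ + S) y := by
  set P := Aᵀ * S⁻¹ * A + SigΘ⁻¹ with hPdef
  have hP : P.PosDef := posDef_add_posSemidef (posSemidef_conj hS.inv.posSemidef A) hSigΘ.inv
  have hMg : (A * SigΘ * Aᵀ + S).PosDef :=
    posDef_add_posSemidef (posSemidef_conj' hSigΘ.posSemidef A) hS
  have hSdu : IsUnit S.det := isUnit_iff_ne_zero.mpr (ne_of_gt hS.det_pos)
  have hTdu : IsUnit SigΘ.det := isUnit_iff_ne_zero.mpr (ne_of_gt hSigΘ.det_pos)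
  have hPdu : IsUnit P.det := isUnit_iff_ne_zero.mpr (ne_of_gt hP.det_pos)
  have hS1 : S⁻¹ * S = 1 := Matrix.nonsing_inv_mul S hSdu
  have hS2 : S * S⁻¹ = 1 := Matrix.mul_nonsing_inv S hSdu
  have hT1 : SigΘ⁻¹ * SigΘ = 1 := Matrix.nonsing_inv_mul SigΘ hTdu
  have hPQ : P * P⁻¹ = 1 := Matrix.mul_nonsing_inv P hPdu
  have hQP : P⁻¹ * P = 1 := Matrix.nonsing_inv_mul P hPdu
  have hPP : P⁻¹⁻¹ = P := Matrix.nonsing_inv_nonsing_inv P hPdu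
  have hSymSi : (S⁻¹)ᵀ = S⁻¹ := by simpa using hS.inv.1.eq
  have hSymP : Pᵀ = P := by simpa using hP.1.eq
  have hSymQ : (P⁻¹)ᵀ = P⁻¹ := by simpa using hP.inv.1.eq
  have hWood : (A * SigΘ * Aᵀ + S)⁻¹ = S⁻¹ - S⁻¹ * A * P⁻¹ * Aᵀ * S⁻¹ :=
    Matrix.inv_eq_left_inv (woodbury A S S⁻¹ SigΘ SigΘ⁻¹ P⁻¹ hS1 hT1 hQP)
  have hdet : (A * SigΘ * Aᵀ + S).det = P.det * SigΘ.det * S.det :=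
    det_split A S S⁻¹ SigΘ SigΘ⁻¹ hS2 hT1
  have hdetQ : (P⁻¹).det * P.det = 1 := by
    rw [← Matrix.det_mul, hQP, Matrix.det_one]
  -- key matrix identities
  have hKA : P * (P⁻¹ * Aᵀ * S⁻¹) = Aᵀ * S⁻¹ := by
    rw [← Matrix.mul_assoc, ← Matrix.mul_assoc, hPQ, Matrix.one_mul]
  have hKT : (P⁻¹ * Aᵀ * S⁻¹)ᵀ = S⁻¹ * A * P⁻¹ := by
    rw [Matrix.transpose_mul, Matrix.transpose_mul, Matrix.transpose_transpose, hSymSi, hSymQ,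
      Matrix.mul_assoc]
  have hKTP : (S⁻¹ * A * P⁻¹) * P = S⁻¹ * A := by
    rw [Matrix.mul_assoc, hQP, Matrix.mul_one]
  -- quadratic identity
  have hquad : ∀ (z : Fin m → ℝ) (w : Fin n → ℝ),
      z ⬝ᵥ SigΘ⁻¹ *ᵥ z + (w - A *ᵥ z) ⬝ᵥ S⁻¹ *ᵥ (w - A *ᵥ z)
        = (z - (P⁻¹ * Aᵀ * S⁻¹) *ᵥ w) ⬝ᵥ P *ᵥ (z - (P⁻¹ * Aᵀ * S⁻¹) *ᵥ w)
          + w ⬝ᵥ (A * SigΘ * Aᵀ + S)⁻¹ *ᵥ w := by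
    intro z w
    have e_a : (A *ᵥ z) ⬝ᵥ S⁻¹ *ᵥ w = z ⬝ᵥ (Aᵀ * S⁻¹) *ᵥ w := by
      rw [dot_shift A z (S⁻¹ *ᵥ w), Matrix.mulVec_mulVec]
    have e_b : w ⬝ᵥ S⁻¹ *ᵥ (A *ᵥ z) = z ⬝ᵥ (Aᵀ * S⁻¹) *ᵥ w := by
      rw [Matrix.mulVec_mulVec, dotProduct_comm, dot_shift, Matrix.transpose_mul, hSymSi]
    have e_c : (A *ᵥ z) ⬝ᵥ S⁻¹ *ᵥ (A *ᵥ z) = z ⬝ᵥ (Aᵀ * S⁻¹ * A) *ᵥ z := by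
      rw [dot_shift A z (S⁻¹ *ᵥ (A *ᵥ z)), Matrix.mulVec_mulVec, Matrix.mulVec_mulVec]
    have f_a : z ⬝ᵥ P *ᵥ ((P⁻¹ * Aᵀ * S⁻¹) *ᵥ w) = z ⬝ᵥ (Aᵀ * S⁻¹) *ᵥ w := by
      rw [Matrix.mulVec_mulVec, hKA]
    have f_b : ((P⁻¹ * Aᵀ * S⁻¹) *ᵥ w) ⬝ᵥ P *ᵥ z = z ⬝ᵥ (Aᵀ * S⁻¹) *ᵥ w := by
      rw [dot_shift, hKT, Matrix.mulVec_mulVec, hKTP, dotProduct_comm, dot_shift,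
        Matrix.transpose_mul, hSymSi]
    have f_c : ((P⁻¹ * Aᵀ * S⁻¹) *ᵥ w) ⬝ᵥ P *ᵥ ((P⁻¹ * Aᵀ * S⁻¹) *ᵥ w)
        = w ⬝ᵥ (S⁻¹ * A * P⁻¹ * Aᵀ * S⁻¹) *ᵥ w := by
      rw [Matrix.mulVec_mulVec, hKA, dot_shift, hKT, Matrix.mulVec_mulVec]
      rw [show S⁻¹ * A * P⁻¹ * (Aᵀ * S⁻¹) = S⁻¹ * A * P⁻¹ * Aᵀ * S⁻¹ from
        (Matrix.mul_assoc _ _ _).symm]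
    have hPz : z ⬝ᵥ P *ᵥ z = z ⬝ᵥ (Aᵀ * S⁻¹ * A) *ᵥ z + z ⬝ᵥ SigΘ⁻¹ *ᵥ z := by
      rw [hPdef, Matrix.add_mulVec, dotProduct_add]
    have hwood' : w ⬝ᵥ (A * SigΘ * Aᵀ + S)⁻¹ *ᵥ w
        = w ⬝ᵥ S⁻¹ *ᵥ w - w ⬝ᵥ (S⁻¹ * A * P⁻¹ * Aᵀ * S⁻¹) *ᵥ w := by
      rw [hWood, Matrix.sub_mulVec, dotProduct_sub]
    rw [Matrix.mulVec_sub, dotProduct_sub, sub_dotProduct, sub_dotProduct,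
      Matrix.mulVec_sub, dotProduct_sub, sub_dotProduct, sub_dotProduct]
    rw [e_a, e_b, e_c, f_a, f_b, f_c, hPz, hwood']
    ring
  -- mean identity
  have hmat : (P⁻¹ * Aᵀ * S⁻¹) * A + P⁻¹ * SigΘ⁻¹ = 1 := by
    have : (P⁻¹ * Aᵀ * S⁻¹) * A = P⁻¹ * (Aᵀ * S⁻¹ * A) := by
      simp only [Matrix.mul_assoc]
    rw [this, ← Matrix.mul_add, ← hPdef, hQP]
  have hbv : (P⁻¹ * Aᵀ * S⁻¹) *ᵥ (A *ᵥ μΘ) + P⁻¹ *ᵥ (SigΘ⁻¹ *ᵥ μΘ) = μΘ := by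
    rw [Matrix.mulVec_mulVec, Matrix.mulVec_mulVec, ← Matrix.add_mulVec, hmat,
      Matrix.one_mulVec]
  -- arguments
  have harg1 : y - A *ᵥ θ = (y - A *ᵥ μΘ) - A *ᵥ (θ - μΘ) := by
    rw [Matrix.mulVec_sub]
    abel
  have hbv' : P⁻¹ *ᵥ (SigΘ⁻¹ *ᵥ μΘ) = μΘ - (P⁻¹ * Aᵀ * S⁻¹) *ᵥ (A *ᵥ μΘ) :=
    eq_sub_of_add_eq' hbv
  have harg2 : θ - ((P⁻¹ * Aᵀ * S⁻¹) *ᵥ y + P⁻¹ *ᵥ (SigΘ⁻¹ *ᵥ μΘ))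
      = (θ - μΘ) - (P⁻¹ * Aᵀ * S⁻¹) *ᵥ (y - A *ᵥ μΘ) := by
    rw [hbv', Matrix.mulVec_sub]
    abel
  -- determinant/constant identity
  have hcon : (2 * π) ^ m * SigΘ.det * ((2 * π) ^ n * S.det)
      = (2 * π) ^ m * (P⁻¹).det * ((2 * π) ^ n * (A * SigΘ * Aᵀ + S).det) := by
    rw [hdet]
    linear_combination (-((2*π)^m * (2*π)^n * SigΘ.det * S.det)) * hdetQ
  -- assemble
  unfold gpdf
  rw [hPP]
  rw [mul_mul_mul_comm, ← Real.exp_add, mul_mul_mul_comm, ← Real.exp_add]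
  rw [← mul_inv, ← mul_inv,
    ← Real.sqrt_mul (mul_nonneg (by positivity) hSigΘ.det_pos.le),
    ← Real.sqrt_mul (mul_nonneg (by positivity) hP.inv.det_pos.le)]
  rw [hcon]
  congr 1
  rw [harg1, harg2]
  congr 1
  have hq := hquad (θ - μΘ) (y - A *ᵥ μΘ)
  linarith [hq]

end Conj

end Aux

/-- The ELBO loss of the Gaussian encoder `p_φ(θ|y) = N(R y + b, Q)`:
`E_Y E^φ_{Θ|Y}[log(p_φ(θ|y)/p(θ))] + E_Y E^φ_{Θ|Y}[−log p(y|θ)]`, where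
`Y ~ N(AμΘ, AΣΘAᵀ + S)` is the Gaussian data marginal. -/
noncomputable def elboLoss {m n : ℕ} (μΘ : Fin m → ℝ) (SigΘ : Matrix (Fin m) (Fin m) ℝ)
    (A : Matrix (Fin n) (Fin m) ℝ) (S : Matrix (Fin n) (Fin n) ℝ)
    (R : Matrix (Fin m) (Fin n) ℝ) (b : Fin m → ℝ) (Q : Matrix (Fin m) (Fin m) ℝ) : ℝ :=
  ∫ y : Fin n → ℝ, gpdf (A *ᵥ μΘ) (A * SigΘ * Aᵀ + S) y *
    ∫ θ : Fin m → ℝ, gpdf (R *ᵥ y + b) Q θ *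
      (Real.log (gpdf (R *ᵥ y + b) Q θ / gpdf μΘ SigΘ θ) - Real.log (gpdf (A *ᵥ θ) S y))

/-- The minimizer of the ELBO loss over Gaussian encoders `(R_φ, b_φ, Q_φ)` with `Q_φ`
positive definite is the exact Bayes posterior `Q_φ = (AᵀS⁻¹A + Σ_Θ⁻¹)⁻¹`,
`R_φ = Q_φ Aᵀ S⁻¹`, `b_φ = Q_φ Σ_Θ⁻¹ μ_Θ`. -/
theorem stmt10 {m n : ℕ} (μΘ : Fin m → ℝ) (SigΘ : Matrix (Fin m) (Fin m) ℝ)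
    (A : Matrix (Fin n) (Fin m) ℝ) (S : Matrix (Fin n) (Fin n) ℝ)
    (hSigΘ : SigΘ.PosDef) (hS : S.PosDef)
    (Qφ : Matrix (Fin m) (Fin m) ℝ) (hQφ : Qφ = (Aᵀ * S⁻¹ * A + SigΘ⁻¹)⁻¹)
    (Rφ : Matrix (Fin m) (Fin n) ℝ) (hRφ : Rφ = Qφ * Aᵀ * S⁻¹)
    (bφ : Fin m → ℝ) (hbφ : bφ = Qφ *ᵥ (SigΘ⁻¹ *ᵥ μΘ)) :
    ∀ (R : Matrix (Fin m) (Fin n) ℝ) (b : Fin m → ℝ) (Q : Matrix (Fin m) (Fin m) ℝ),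
      Q.PosDef →
      elboLoss μΘ SigΘ A S Rφ bφ Qφ ≤ elboLoss μΘ SigΘ A S R b Q := by
  subst hQφ
  subst hRφ
  subst hbφ
  intro R b Q hQ
  have hP : (Aᵀ * S⁻¹ * A + SigΘ⁻¹).PosDef :=
    posDef_add_posSemidef (posSemidef_conj hS.inv.posSemidef A) hSigΘ.inv
  set P := Aᵀ * S⁻¹ * A + SigΘ⁻¹ with hPdef
  have hQp : (P⁻¹).PosDef := hP.inv
  have hMgpd : (A * SigΘ * Aᵀ + S).PosDef :=
    posDef_add_posSemidef (posSemidef_conj' hSigΘ.posSemidef A) hS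
  set Mg := A * SigΘ * Aᵀ + S with hMgdef
  have hPdu : IsUnit P.det := isUnit_iff_ne_zero.mpr (ne_of_gt hP.det_pos)
  have hPP : P⁻¹⁻¹ = P := Matrix.nonsing_inv_nonsing_inv P hPdu
  have hSymP : Pᵀ = P := by simpa using hP.1.eq
  have hSymQi : (P⁻¹⁻¹)ᵀ = P⁻¹⁻¹ := by rw [hPP]; exact hSymP
  set Rp := P⁻¹ * Aᵀ * S⁻¹ with hRpdef
  set bv := P⁻¹ *ᵥ (SigΘ⁻¹ *ᵥ μΘ) with hbvdef
  set yb := A *ᵥ μΘ with hybdef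
  have hconj : ∀ (θ : Fin m → ℝ) (y : Fin n → ℝ),
      gpdf μΘ SigΘ θ * gpdf (A *ᵥ θ) S y
        = gpdf (Rp *ᵥ y + bv) P⁻¹ θ * gpdf yb Mg y :=
    fun θ y => conj_density μΘ SigΘ A S hSigΘ hS θ y
  -- pointwise log identity
  have hlog : ∀ (q : ℝ), 0 < q → ∀ (θ : Fin m → ℝ) (y : Fin n → ℝ),
      Real.log (q / gpdf μΘ SigΘ θ) - Real.log (gpdf (A *ᵥ θ) S y)
        = Real.log (q / gpdf (Rp *ᵥ y + bv) P⁻¹ θ) - Real.log (gpdf yb Mg y) := by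
    intro q hq θ y
    have h1 : 0 < gpdf μΘ SigΘ θ := gpdf_pos hSigΘ _ _
    have h2 : 0 < gpdf (A *ᵥ θ) S y := gpdf_pos hS _ _
    have h3 : 0 < gpdf (Rp *ᵥ y + bv) P⁻¹ θ := gpdf_pos hQp _ _
    have h4 : 0 < gpdf yb Mg y := gpdf_pos hMgpd _ _
    have h5 : Real.log (gpdf μΘ SigΘ θ) + Real.log (gpdf (A *ᵥ θ) S y)
        = Real.log (gpdf (Rp *ᵥ y + bv) P⁻¹ θ) + Real.log (gpdf yb Mg y) := by
      rw [← Real.log_mul (ne_of_gt h1) (ne_of_gt h2),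
        ← Real.log_mul (ne_of_gt h3) (ne_of_gt h4), hconj θ y]
    rw [Real.log_div (ne_of_gt hq) (ne_of_gt h1), Real.log_div (ne_of_gt hq) (ne_of_gt h3)]
    linarith
  -- inner integral identity
  have inner_eq : ∀ (R' : Matrix (Fin m) (Fin n) ℝ) (b' : Fin m → ℝ)
      (Q' : Matrix (Fin m) (Fin m) ℝ), Q'.PosDef → ∀ (y : Fin n → ℝ),
      (∫ θ : Fin m → ℝ, gpdf (R' *ᵥ y + b') Q' θ *
        (Real.log (gpdf (R' *ᵥ y + b') Q' θ / gpdf μΘ SigΘ θ)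
          - Real.log (gpdf (A *ᵥ θ) S y)))
      = (∫ θ : Fin m → ℝ, gpdf (R' *ᵥ y + b') Q' θ *
           Real.log (gpdf (R' *ᵥ y + b') Q' θ / gpdf (Rp *ᵥ y + bv) P⁻¹ θ))
        - Real.log (gpdf yb Mg y) := by
    intro R' b' Q' hQ' y
    have hrw : (fun θ : Fin m → ℝ => gpdf (R' *ᵥ y + b') Q' θ *
        (Real.log (gpdf (R' *ᵥ y + b') Q' θ / gpdf μΘ SigΘ θ)
          - Real.log (gpdf (A *ᵥ θ) S y)))
        = fun θ : Fin m → ℝ =>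
            gpdf (R' *ᵥ y + b') Q' θ *
              Real.log (gpdf (R' *ᵥ y + b') Q' θ / gpdf (Rp *ᵥ y + bv) P⁻¹ θ)
            - gpdf (R' *ᵥ y + b') Q' θ * Real.log (gpdf yb Mg y) := by
      funext θ
      rw [hlog _ (gpdf_pos hQ' _ _) θ y]
      ring
    rw [hrw, integral_sub (KL_integrable hQ' hQp hSymQi _ _)
      ((gauss_integrable hQ' _).mul_const _), integral_mul_const, gauss_integral_one hQ',
      one_mul]
  -- optimal KL is zero
  have hKLopt : ∀ y : Fin n → ℝ, (∫ θ : Fin m → ℝ, gpdf (Rp *ᵥ y + bv) P⁻¹ θ *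
      Real.log (gpdf (Rp *ᵥ y + bv) P⁻¹ θ / gpdf (Rp *ᵥ y + bv) P⁻¹ θ)) = 0 := by
    intro y
    rw [show (fun θ : Fin m → ℝ => gpdf (Rp *ᵥ y + bv) P⁻¹ θ *
        Real.log (gpdf (Rp *ᵥ y + bv) P⁻¹ θ / gpdf (Rp *ᵥ y + bv) P⁻¹ θ))
      = fun _ => (0:ℝ) from funext fun θ => by
        rw [div_self (ne_of_gt (gpdf_pos hQp _ _)), Real.log_one, mul_zero]]
    exact integral_zero _ _
  -- rewrite both elboLoss
  unfold elboLoss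
  rw [show (fun y : Fin n → ℝ => gpdf yb Mg y *
      ∫ θ : Fin m → ℝ, gpdf (Rp *ᵥ y + bv) P⁻¹ θ *
        (Real.log (gpdf (Rp *ᵥ y + bv) P⁻¹ θ / gpdf μΘ SigΘ θ)
          - Real.log (gpdf (A *ᵥ θ) S y)))
    = fun y : Fin n → ℝ => gpdf yb Mg y * (- Real.log (gpdf yb Mg y)) from funext fun y => by
      rw [inner_eq Rp bv P⁻¹ hQp y, hKLopt y]; ring]
  set KL : (Fin n → ℝ) → ℝ := fun y => ∫ θ : Fin m → ℝ, gpdf (R *ᵥ y + b) Q θ *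
      Real.log (gpdf (R *ᵥ y + b) Q θ / gpdf (Rp *ᵥ y + bv) P⁻¹ θ) with hKLdef
  rw [show (fun y : Fin n → ℝ => gpdf yb Mg y *
      ∫ θ : Fin m → ℝ, gpdf (R *ᵥ y + b) Q θ *
        (Real.log (gpdf (R *ᵥ y + b) Q θ / gpdf μΘ SigΘ θ)
          - Real.log (gpdf (A *ᵥ θ) S y)))
    = fun y : Fin n → ℝ => gpdf yb Mg y * KL y
        + gpdf yb Mg y * (- Real.log (gpdf yb Mg y)) from funext fun y => by
      rw [inner_eq R b Q hQ y]; simp only [hKLdef]; ring]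
  -- integrability of the two outer pieces
  have hF : Integrable (fun y : Fin n → ℝ => gpdf yb Mg y * (- Real.log (gpdf yb Mg y))) :=
    neglog_integrable hMgpd yb
  -- closed form of KL for integrability
  set D := R - Rp with hDdef
  set e' := D *ᵥ yb + (b - bv) with hedef
  have hdy : ∀ y : Fin n → ℝ, (R *ᵥ y + b) - (Rp *ᵥ y + bv) = D *ᵥ (y - yb) + e' := by
    intro y
    rw [hedef, hDdef, Matrix.mulVec_sub, Matrix.sub_mulVec, Matrix.sub_mulVec]
    abel
  have hKLval : ∀ y : Fin n → ℝ, KL y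
      = (Real.log (Real.sqrt ((2*π)^m * (P⁻¹).det)) - Real.log (Real.sqrt ((2*π)^m * Q.det))
          + (1/2 : ℝ) * ((D *ᵥ (y - yb) + e') ⬝ᵥ P *ᵥ (D *ᵥ (y - yb) + e')))
        + (((1/2 : ℝ) • P⁻¹⁻¹ - (1/2 : ℝ) • Q⁻¹) * Q).trace := by
    intro y
    simp only [hKLdef]
    have hv := KL_value hQ hQp hSymQi (R *ᵥ y + b) (Rp *ᵥ y + bv)
    rw [hv, hPP, hdy y]
  -- integrand in master form
  have hGint : Integrable (fun y : Fin n → ℝ => gpdf yb Mg y * KL y) := by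
    apply (gauss_integrable_poly hMgpd yb
      ((Real.log (Real.sqrt ((2*π)^m * (P⁻¹).det)) - Real.log (Real.sqrt ((2*π)^m * Q.det))
          + (1/2 : ℝ) * (e' ⬝ᵥ P *ᵥ e'))
        + (((1/2 : ℝ) • P⁻¹⁻¹ - (1/2 : ℝ) • Q⁻¹) * Q).trace)
      ((1/2 : ℝ) • (Dᵀ *ᵥ ((2:ℝ) • (P *ᵥ e'))))
      ((1/2 : ℝ) • (Dᵀ * (P * D)))).congr
    filter_upwards with y
    rw [hKLval y, quad_expand hSymP (D *ᵥ (y - yb)) e']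
    have c1 : ((2:ℝ) • (P *ᵥ e')) ⬝ᵥ (D *ᵥ (y - yb))
        = (Dᵀ *ᵥ ((2:ℝ) • (P *ᵥ e'))) ⬝ᵥ (y - yb) := by
      rw [dotProduct_comm, dot_shift, dotProduct_comm]
    have c2 : (D *ᵥ (y - yb)) ⬝ᵥ P *ᵥ (D *ᵥ (y - yb))
        = (y - yb) ⬝ᵥ (Dᵀ * (P * D)) *ᵥ (y - yb) := by
      rw [Matrix.mulVec_mulVec, dot_shift, Matrix.mulVec_mulVec]
    rw [c1, c2]
    have c3 : ((1/2 : ℝ) • (Dᵀ *ᵥ ((2:ℝ) • (P *ᵥ e')))) ⬝ᵥ (y - yb)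
        = (1/2 : ℝ) * ((Dᵀ *ᵥ ((2:ℝ) • (P *ᵥ e'))) ⬝ᵥ (y - yb)) := by
      rw [smul_dotProduct, smul_eq_mul]
    have c4 : (y - yb) ⬝ᵥ ((1/2 : ℝ) • (Dᵀ * (P * D))) *ᵥ (y - yb)
        = (1/2 : ℝ) * ((y - yb) ⬝ᵥ (Dᵀ * (P * D)) *ᵥ (y - yb)) := by
      rw [Matrix.smul_mulVec, dotProduct_smul, smul_eq_mul]
    rw [c3, c4]
    ring
  rw [integral_add hGint hF]
  have hGnn : 0 ≤ ∫ y : Fin n → ℝ, gpdf yb Mg y * KL y := by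
    apply integral_nonneg
    intro y
    exact mul_nonneg (gpdf_pos hMgpd _ _).le (KL_nonneg hQ hQp hSymQi _ _)
  linarith
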